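/- (Lemma 2.) Let s, t, w, w̃, σ ∈ ℝ³, let b = √(1+‖w‖²), and let W^{-1} denote the 3×3 matrix I − ww^T/(b(b+1)). Then the pair of equations t = b^{-1} w × σ + W^{-1} w̃ and s = σ + (b+1)^{-1} w̃ × w holds if and only if the pair of equations w̃ = b t + s × w and σ = b W^{-1} s + (b/(b+1)) w × t holds. -/

import Mathlib

open Matrix

/-- `b = √(1+‖w‖²)`. -/
noncomputable def bOf (w : Fin 3 → ℝ) : ℝ := Real.sqrt (1 + w ⬝ᵥ w)

/-- `W⁻¹ = I − w wᵀ/(b(b+1))`. -/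
noncomputable def WinvOf (w : Fin 3 → ℝ) : Matrix (Fin 3) (Fin 3) ℝ :=
  1 - (bOf w * (bOf w + 1))⁻¹ • vecMulVec w w

private lemma vecMulVec_mulVec' (u v x : Fin 3 → ℝ) : vecMulVec u v *ᵥ x = (v ⬝ᵥ x) • u := by
  ext i; simp [vecMulVec, mulVec, dotProduct, Finset.mul_sum, mul_comm, mul_left_comm]

private lemma cross3 (a b c : Fin 3 → ℝ) :
    a ⨯₃ (b ⨯₃ c) = (a ⬝ᵥ c) • b - (a ⬝ᵥ b) • c := by
  ext i; fin_cases i <;> simp [cross_apply, dotProduct, Fin.sum_univ_three] <;> ring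

private lemma cross3' (a b c : Fin 3 → ℝ) :
    (a ⨯₃ b) ⨯₃ c = (a ⬝ᵥ c) • b - (b ⬝ᵥ c) • a := by
  ext i; fin_cases i <;> simp [cross_apply, dotProduct, Fin.sum_univ_three] <;> ring

private lemma Winv_apply (w x : Fin 3 → ℝ) :
    WinvOf w *ᵥ x = x - ((bOf w * (bOf w + 1))⁻¹ * (w ⬝ᵥ x)) • w := by
  simp [WinvOf, sub_mulVec, smul_mulVec, vecMulVec_mulVec', smul_smul]

/-- Lemma 2: the equations
`t = b⁻¹ w×σ + W⁻¹w̃` and `s = σ + (b+1)⁻¹ w̃×w`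
hold iff
`w̃ = b t + s×w` and `σ = b W⁻¹s + (b/(b+1)) w×t`. -/
theorem lemma2_inversion (s t w wt σ : Fin 3 → ℝ) :
    (t = (bOf w)⁻¹ • crossProduct w σ + WinvOf w *ᵥ wt ∧
      s = σ + (bOf w + 1)⁻¹ • crossProduct wt w)
    ↔ (wt = bOf w • t + crossProduct s w ∧
        σ = bOf w • (WinvOf w *ᵥ s) + (bOf w / (bOf w + 1)) • crossProduct w t) := by
  have hw : (0:ℝ) ≤ w ⬝ᵥ w := by
    simp only [dotProduct, Fin.sum_univ_three]
    nlinarith [mul_self_nonneg (w 0), mul_self_nonneg (w 1), mul_self_nonneg (w 2)]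
  have hbpos : 0 < bOf w := Real.sqrt_pos.2 (by linarith)
  have hb0 : bOf w ≠ 0 := ne_of_gt hbpos
  have hb1 : bOf w + 1 ≠ 0 := by linarith
  have hn : w ⬝ᵥ w = bOf w * bOf w - 1 := by
    have := Real.mul_self_sqrt (show (0:ℝ) ≤ 1 + w ⬝ᵥ w by linarith)
    simp only [bOf]; linarith
  set b := bOf w with hb
  constructor
  · rintro ⟨h1, h2⟩
    subst h1 h2
    constructor
    · rw [Winv_apply]
      simp only [← hb]
      simp only [map_add, _root_.map_smul, map_neg, map_sub, LinearMap.neg_apply, LinearMap.sub_apply,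
        LinearMap.add_apply, LinearMap.smul_apply,
        cross3', cross3, dotProduct_comm wt w, dotProduct_comm σ w,
        dot_cross_self, dot_self_cross, dotProduct_smul, dotProduct_sub, dotProduct_add,
        smul_eq_mul, dotProduct_neg, smul_sub, smul_add, smul_neg, smul_smul, hn,
        cross_self, smul_zero, zero_smul, neg_zero, add_zero, zero_add, sub_zero, dotProduct_zero]
      simp only [← cross_anticomm w, smul_neg]
      match_scalars <;> field_simp <;> ring
    · rw [Winv_apply, Winv_apply]
      simp only [← hb]
      simp only [map_add, _root_.map_smul, map_neg, map_sub, LinearMap.neg_apply, LinearMap.sub_apply,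
        LinearMap.add_apply, LinearMap.smul_apply,
        cross3', cross3, dotProduct_comm wt w, dotProduct_comm σ w,
        dot_cross_self, dot_self_cross, dotProduct_smul, dotProduct_sub, dotProduct_add,
        smul_eq_mul, dotProduct_neg, smul_sub, smul_add, smul_neg, smul_smul, hn,
        cross_self, smul_zero, zero_smul, neg_zero, add_zero, zero_add, sub_zero, dotProduct_zero]
      simp only [← cross_anticomm w, smul_neg]
      match_scalars <;> field_simp <;> ring
  · rintro ⟨h1, h2⟩
    subst h1 h2
    constructor
    · rw [Winv_apply, Winv_apply]
      simp only [← hb]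
      simp only [map_add, _root_.map_smul, map_neg, map_sub, LinearMap.neg_apply, LinearMap.sub_apply,
        LinearMap.add_apply, LinearMap.smul_apply,
        cross3', cross3, dotProduct_comm s w, dotProduct_comm t w,
        dot_cross_self, dot_self_cross, dotProduct_smul, dotProduct_sub, dotProduct_add,
        smul_eq_mul, dotProduct_neg, smul_sub, smul_add, smul_neg, smul_smul, hn,
        cross_self, smul_zero, zero_smul, neg_zero, add_zero, zero_add, sub_zero, dotProduct_zero]
      simp only [← cross_anticomm w, smul_neg]
      match_scalars <;> field_simp <;> ring
    · rw [Winv_apply]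
      simp only [← hb]
      simp only [map_add, _root_.map_smul, map_neg, map_sub, LinearMap.neg_apply, LinearMap.sub_apply,
        LinearMap.add_apply, LinearMap.smul_apply,
        cross3', cross3, dotProduct_comm s w, dotProduct_comm t w,
        dot_cross_self, dot_self_cross, dotProduct_smul, dotProduct_sub, dotProduct_add,
        smul_eq_mul, dotProduct_neg, smul_sub, smul_add, smul_neg, smul_smul, hn,
        cross_self, smul_zero, zero_smul, neg_zero, add_zero, zero_add, sub_zero, dotProduct_zero]
      simp only [← cross_anticomm w, smul_neg]
      match_scalars <;> field_simp <;> ring
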